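/- Let 0 < β be a real number, let S and S₀ be C¹ survival functions on [0,β] with S(0) = S₀(0) = 1 and hazard rates λ := −S'/S, λ₀ := −S₀'/S₀, and let G be a finite Borel measure on ℝ. Define γ♮(y) := ∫_{[y,β]} S(w)⁻¹ dG(w). Then ∫_{[0,β]} (S(w) − S₀(w))/S(w)² dG(w) = −∫₀^β γ♮(y) · (S₀(y)/S(y)) · (λ(y) − λ₀(y)) dy, where the outer integral on the right is with respect to Lebesgue measure on [0,β]. (Lemma 1(b).) -/

import Mathlib

open Set MeasureTheory intervalIntegral

/-- Lemma 1(b): for C¹ survival functions `S`, `S₀` on `[0,β]` with `S 0 = S₀ 0 = 1`,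
hazard rates `λ = -S'/S`, `λ₀ = -S₀'/S₀`, a finite Borel measure `G`, and the partial
truncation weight `γ♮ y = ∫_{[y,β]} S(w)⁻¹ dG(w)`,
`∫_{[0,β]} (S - S₀)/S² dG = -∫₀^β γ♮ y (S₀ y/S y)(λ y - λ₀ y) dy`. -/
theorem truncation_weight_linearization
    (β : ℝ) (hβ : 0 < β)
    (S S' S₀ S₀' : ℝ → ℝ)
    (hS : ∀ y ∈ Icc (0:ℝ) β, HasDerivAt S (S' y) y)
    (hS' : ContinuousOn S' (Icc 0 β))
    (hSmono : AntitoneOn S (Icc 0 β))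
    (hSpos : ∀ y ∈ Icc (0:ℝ) β, 0 < S y ∧ S y ≤ 1)
    (hS₀ : ∀ y ∈ Icc (0:ℝ) β, HasDerivAt S₀ (S₀' y) y)
    (hS₀' : ContinuousOn S₀' (Icc 0 β))
    (hS₀mono : AntitoneOn S₀ (Icc 0 β))
    (hS₀pos : ∀ y ∈ Icc (0:ℝ) β, 0 < S₀ y ∧ S₀ y ≤ 1)
    (hS0 : S 0 = 1) (hS₀0 : S₀ 0 = 1)
    (G : Measure ℝ) [IsFiniteMeasure G] :
    (∫ w in Icc (0:ℝ) β, (S w - S₀ w) / (S w)^2 ∂G)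
      = -∫ y in (0:ℝ)..β,
          (∫ w in Icc y β, (S w)⁻¹ ∂G) * (S₀ y / S y)
            * ((-(S' y) / S y) - (-(S₀' y) / S₀ y)) := by
  have hβmem : β ∈ Icc (0:ℝ) β := right_mem_Icc.mpr hβ.le
  have hScont : ContinuousOn S (Icc 0 β) :=
    fun y hy => (hS y hy).continuousAt.continuousWithinAt
  have hS₀cont : ContinuousOn S₀ (Icc 0 β) :=
    fun y hy => (hS₀ y hy).continuousAt.continuousWithinAt
  have hSne : ∀ y ∈ Icc (0:ℝ) β, S y ≠ 0 := fun y hy => (hSpos y hy).1.ne'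
  have hS₀ne : ∀ y ∈ Icc (0:ℝ) β, S₀ y ≠ 0 := fun y hy => (hS₀pos y hy).1.ne'
  set φ : ℝ → ℝ := fun y => (S₀' y * S y - S₀ y * S' y) / (S y) ^ 2 with hφdef
  have hφderiv : ∀ y ∈ Icc (0:ℝ) β, HasDerivAt (fun z => S₀ z / S z) (φ y) y :=
    fun y hy => (hS₀ y hy).div (hS y hy) (hSne y hy)
  have hφcont : ContinuousOn φ (Icc 0 β) :=
    ((hS₀'.mul hScont).sub (hS₀cont.mul hS')).div (hScont.pow 2)
      (fun y hy => pow_ne_zero 2 (hSne y hy))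
  -- FTC
  have hFTC : ∀ w ∈ Icc (0:ℝ) β, (∫ y in (0:ℝ)..w, φ y) = S₀ w / S w - 1 := by
    intro w hw
    have hsub : Icc (0:ℝ) w ⊆ Icc 0 β := Icc_subset_Icc le_rfl hw.2
    have huIcc : uIcc (0:ℝ) w = Icc 0 w := uIcc_of_le hw.1
    have h1 := intervalIntegral.integral_eq_sub_of_hasDerivAt
      (f := fun z => S₀ z / S z) (f' := φ)
      (fun y hy => hφderiv y (hsub (huIcc ▸ hy)))
      (ContinuousOn.intervalIntegrable (by rw [huIcc]; exact hφcont.mono hsub))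
    rw [h1]; simp [hS0, hS₀0]
  -- measures
  set ν : Measure ℝ := G.restrict (Icc (0:ℝ) β) with hν
  set μ : Measure ℝ := volume.restrict (Ioc (0:ℝ) β) with hμ
  have hμfin : IsFiniteMeasure μ := by
    constructor
    rw [hμ, Measure.restrict_apply_univ]
    exact measure_Ioc_lt_top
  have hνfin : IsFiniteMeasure ν := by
    rw [hν]; infer_instance
  -- the kernel of Fubini
  set T : Set (ℝ × ℝ) := {p : ℝ × ℝ | 0 < p.2 ∧ p.2 ≤ p.1} with hT
  have hTmeas : MeasurableSet T :=
    (measurableSet_lt measurable_const measurable_snd).inter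
      (measurableSet_le measurable_snd measurable_fst)
  set F : ℝ × ℝ → ℝ := T.indicator (fun p => (S p.1)⁻¹ * φ p.2) with hF
  have hprodset : MeasurableSet (Icc (0:ℝ) β ×ˢ Ioc (0:ℝ) β) :=
    measurableSet_Icc.prod measurableSet_Ioc
  have hprodeq : ν.prod μ = (G.prod volume).restrict (Icc (0:ℝ) β ×ˢ Ioc (0:ℝ) β) := by
    rw [hν, hμ, Measure.prod_restrict]
  -- boundedness
  obtain ⟨M, hM⟩ := isCompact_Icc.exists_bound_of_continuousOn hφcont
  have hM0 : 0 ≤ M := le_trans (norm_nonneg _) (hM 0 (left_mem_Icc.mpr hβ.le))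
  have hSβ : 0 < S β := (hSpos β hβmem).1
  have hbound : ∀ p ∈ (Icc (0:ℝ) β ×ˢ Ioc (0:ℝ) β), ‖F p‖ ≤ (S β)⁻¹ * M := by
    intro p hp
    have hp1 : p.1 ∈ Icc (0:ℝ) β := hp.1
    have hp2 : p.2 ∈ Icc (0:ℝ) β := Ioc_subset_Icc_self hp.2
    have h1 : S β ≤ S p.1 := hSmono hp1 hβmem hp1.2
    have h2 : (S p.1)⁻¹ ≤ (S β)⁻¹ := by
      apply inv_anti₀ hSβ h1
    have h3 : ‖F p‖ ≤ ‖(S p.1)⁻¹ * φ p.2‖ := norm_indicator_le_norm_self _ p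
    refine h3.trans ?_
    rw [norm_mul]
    have h4 : ‖(S p.1)⁻¹‖ = (S p.1)⁻¹ := by
      rw [Real.norm_eq_abs, abs_of_pos (inv_pos.mpr (hSpos p.1 hp1).1)]
    rw [h4]
    exact mul_le_mul h2 (hM p.2 hp2) (norm_nonneg _) (inv_nonneg.mpr hSβ.le)
  -- measurability
  have hcontF : ContinuousOn (fun p : ℝ × ℝ => (S p.1)⁻¹ * φ p.2)
      (Icc (0:ℝ) β ×ˢ Ioc (0:ℝ) β) := by
    have hc1 : ContinuousOn (fun p : ℝ × ℝ => S p.1) (Icc (0:ℝ) β ×ˢ Ioc (0:ℝ) β) :=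
      hScont.comp continuousOn_fst (fun p hp => hp.1)
    have hc2 : ContinuousOn (fun p : ℝ × ℝ => φ p.2) (Icc (0:ℝ) β ×ˢ Ioc (0:ℝ) β) :=
      hφcont.comp continuousOn_snd (fun p hp => Ioc_subset_Icc_self hp.2)
    exact (hc1.inv₀ (fun p hp => hSne p.1 hp.1)).mul hc2
  have hFaesm : AEStronglyMeasurable F (ν.prod μ) := by
    rw [hprodeq]
    exact (hcontF.aestronglyMeasurable hprodset).indicator hTmeas
  have hFint : Integrable F (ν.prod μ) := by
    have : IsFiniteMeasure (ν.prod μ) := by infer_instance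
    refine Integrable.mono' (integrable_const ((S β)⁻¹ * M)) hFaesm ?_
    rw [hprodeq]
    filter_upwards [ae_restrict_mem hprodset] with p hp
    exact hbound p hp
  -- Fubini
  have hswap : (∫ w, ∫ y, F (w, y) ∂μ ∂ν) = ∫ y, ∫ w, F (w, y) ∂ν ∂μ :=
    integral_integral_swap hFint
  -- evaluate the inner integral on the left
  have hleftinner : ∀ w ∈ Icc (0:ℝ) β,
      (∫ y, F (w, y) ∂μ) = (S w)⁻¹ * (S₀ w / S w - 1) := by
    intro w hw
    have hfun : (fun y => F (w, y)) = (Ioc 0 w).indicator (fun y => (S w)⁻¹ * φ y) := by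
      ext y
      by_cases hy : y ∈ Ioc 0 w
      · rw [Set.indicator_of_mem hy, hF,
          Set.indicator_of_mem (show (w, y) ∈ T from ⟨hy.1, hy.2⟩)]
      · rw [Set.indicator_of_notMem hy, hF,
          Set.indicator_of_notMem (by
            intro hmem
            exact hy ⟨hmem.1, hmem.2⟩)]
    rw [hfun, MeasureTheory.integral_indicator measurableSet_Ioc, hμ,
      Measure.restrict_restrict measurableSet_Ioc,
      Set.inter_eq_left.mpr (Ioc_subset_Ioc_right hw.2),
      MeasureTheory.integral_const_mul, ← intervalIntegral.integral_of_le hw.1, hFTC w hw]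
  -- evaluate the inner integral on the right
  have hrightinner : ∀ y ∈ Ioc (0:ℝ) β,
      (∫ w, F (w, y) ∂ν) = (∫ w in Icc y β, (S w)⁻¹ ∂G) * φ y := by
    intro y hy
    have hfun : (fun w => F (w, y)) = (Ici y).indicator (fun w => (S w)⁻¹ * φ y) := by
      ext w
      by_cases hw : w ∈ Ici y
      · rw [Set.indicator_of_mem hw, hF,
          Set.indicator_of_mem (show (w, y) ∈ T from ⟨hy.1, hw⟩)]
      · rw [Set.indicator_of_notMem hw, hF, Set.indicator_of_notMem (by
          intro hmem
          exact hw hmem.2)]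
    have hset : Ici y ∩ Icc 0 β = Icc y β := by
      ext w
      simp only [mem_inter_iff, mem_Ici, mem_Icc]
      constructor
      · rintro ⟨h1, _, h3⟩; exact ⟨h1, h3⟩
      · rintro ⟨h1, h2⟩; exact ⟨h1, hy.1.le.trans h1, h2⟩
    rw [hfun, MeasureTheory.integral_indicator measurableSet_Ici, hν,
      Measure.restrict_restrict measurableSet_Ici, hset, MeasureTheory.integral_mul_const]
  -- put everything together
  have hLHS : (∫ w in Icc (0:ℝ) β, (S w - S₀ w) / (S w)^2 ∂G)
      = -∫ w, ∫ y, F (w, y) ∂μ ∂ν := by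
    rw [← MeasureTheory.integral_neg]
    rw [show (G.restrict (Icc (0:ℝ) β)) = ν from hν.symm] -- align
    apply MeasureTheory.integral_congr_ae
    filter_upwards [ae_restrict_mem (μ := G) measurableSet_Icc] with w hw
    rw [hleftinner w hw]
    have hSw := hSne w hw
    field_simp
    ring_nf
  have hRHS : (∫ y, ∫ w, F (w, y) ∂ν ∂μ)
      = ∫ y in (0:ℝ)..β,
          (∫ w in Icc y β, (S w)⁻¹ ∂G) * (S₀ y / S y)
            * ((-(S' y) / S y) - (-(S₀' y) / S₀ y)) := by
    rw [intervalIntegral.integral_of_le hβ.le]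
    apply MeasureTheory.integral_congr_ae
    filter_upwards [ae_restrict_mem (μ := volume) measurableSet_Ioc] with y hy
    rw [hrightinner y hy]
    have hymem : y ∈ Icc (0:ℝ) β := Ioc_subset_Icc_self hy
    have hSy := hSne y hymem
    have hS₀y := hS₀ne y hymem
    have hφy : φ y = S₀ y / S y * ((-(S' y) / S y) - (-(S₀' y) / S₀ y)) := by
      rw [hφdef]
      field_simp
      ring
    rw [hφy, mul_assoc]
  rw [hLHS, hswap, hRHS]
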